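/- Let A be an invertible block matrix with stage blocks A_{i,j} = 0 unless 0 ≤ i−j ≤ 1, singular values in [σ, Σ] with σ > 0, and define the basic-solution map z(d) := A⁻¹ d with stage components z_i(d) ∈ ℝⁿ and data stages d_j ∈ ℝⁿ. Then for any two data vectors d, d′, ‖z_i(d) − z_i(d′)‖ ≤ Σ_{j=1}^{N} (Σ/σ²) ρ^{max(|i−j|−1,0)} ‖d_j − d′_j‖, where ρ = (Σ²−σ²)/(Σ²+σ²). -/

import Mathlib

open Matrix

/-- Euclidean (ℓ²) norm of a finite real vector. -/
noncomputable def vecEnorm {α : Type*} [Fintype α] (v : α → ℝ) : ℝ :=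
  ‖(WithLp.equiv 2 (α → ℝ)).symm v‖

variable {α : Type*} [Fintype α]

lemma vecEnorm_nonneg' (v : α → ℝ) : 0 ≤ vecEnorm v := norm_nonneg _

lemma vecEnorm_sq (v : α → ℝ) : vecEnorm v ^ 2 = v ⬝ᵥ v := by
  rw [vecEnorm, EuclideanSpace.norm_eq, Real.sq_sqrt (by positivity)]
  simp [dotProduct, sq]

lemma vecEnorm_zero' : vecEnorm (0 : α → ℝ) = 0 := by simp [vecEnorm, WithLp.toLp_zero]

lemma vecEnorm_add_le (u v : α → ℝ) : vecEnorm (u + v) ≤ vecEnorm u + vecEnorm v := by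
  rw [vecEnorm, WithLp.equiv_symm_apply, WithLp.toLp_add]; exact norm_add_le _ _

lemma vecEnorm_sum_le {β : Type*} (s : Finset β) (f : β → α → ℝ) :
    vecEnorm (∑ j ∈ s, f j) ≤ ∑ j ∈ s, vecEnorm (f j) := by
  classical
  induction s using Finset.induction with
  | empty => simp [vecEnorm_zero']
  | insert _ _ h ih =>
    rw [Finset.sum_insert h, Finset.sum_insert h]
    exact le_trans (vecEnorm_add_le _ _) (by linarith)

lemma le_of_sq_le_sq' {x y : ℝ} (hy : 0 ≤ y) (h : x ^ 2 ≤ y ^ 2) (hx : 0 ≤ x) : x ≤ y := by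
  nlinarith

lemma dot_self_nonneg (v : α → ℝ) : 0 ≤ v ⬝ᵥ v :=
  Finset.sum_nonneg fun i _ => mul_self_nonneg _

-- stage norm ≤ full norm
lemma vecEnorm_stage_le {N n : ℕ} (v : Fin N × Fin n → ℝ) (i : Fin N) :
    vecEnorm (fun a => v (i, a)) ≤ vecEnorm v := by
  refine le_of_sq_le_sq' (vecEnorm_nonneg' _) ?_ (vecEnorm_nonneg' _)
  rw [vecEnorm_sq, vecEnorm_sq]
  have : (v ⬝ᵥ v) = ∑ k : Fin N, ∑ a : Fin n, v (k, a) * v (k, a) := by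
    rw [dotProduct, Fintype.sum_prod_type]
  rw [this, dotProduct]
  exact Finset.single_le_sum (f := fun k => ∑ a : Fin n, v (k, a) * v (k, a))
    (fun k _ => Finset.sum_nonneg fun a _ => mul_self_nonneg _) (Finset.mem_univ i)

section Quad
variable {ι : Type*} [Fintype ι] [DecidableEq ι]

-- quadratic form of AᵀA
lemma quadH (A : Matrix ι ι ℝ) (v w : ι → ℝ) :
    v ⬝ᵥ (Aᵀ * A) *ᵥ w = (A *ᵥ v) ⬝ᵥ (A *ᵥ w) := by
  rw [← mulVec_mulVec, dotProduct_mulVec, vecMul_transpose]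

-- PSD lower bound gives quadratic bound
lemma psd_quad_lo (A : Matrix ι ι ℝ) (s : ℝ)
    (h : ((Aᵀ * A) - s • (1 : Matrix ι ι ℝ)).PosSemidef) (v : ι → ℝ) :
    s * (v ⬝ᵥ v) ≤ (A *ᵥ v) ⬝ᵥ (A *ᵥ v) := by
  have := h.dotProduct_mulVec_nonneg v
  simp only [star_trivial, sub_mulVec, dotProduct_sub, smul_mulVec, one_mulVec,
    dotProduct_smul, quadH, smul_eq_mul] at this
  linarith

lemma psd_quad_hi (A : Matrix ι ι ℝ) (S : ℝ)
    (h : (S • (1 : Matrix ι ι ℝ) - (Aᵀ * A)).PosSemidef) (v : ι → ℝ) :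
    (A *ᵥ v) ⬝ᵥ (A *ᵥ v) ≤ S * (v ⬝ᵥ v) := by
  have := h.dotProduct_mulVec_nonneg v
  simp only [star_trivial, sub_mulVec, dotProduct_sub, smul_mulVec, one_mulVec,
    dotProduct_smul, quadH, smul_eq_mul] at this
  linarith

-- Cauchy-Schwarz for a PSD quadratic form
lemma psd_cs {G : Matrix ι ι ℝ} (hG : G.PosSemidef) (x y : ι → ℝ) :
    (x ⬝ᵥ G *ᵥ y) ^ 2 ≤ (x ⬝ᵥ G *ᵥ x) * (y ⬝ᵥ G *ᵥ y) := by
  have hsym : ∀ u w : ι → ℝ, u ⬝ᵥ G *ᵥ w = w ⬝ᵥ G *ᵥ u := by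
    intro u w
    rw [dotProduct_mulVec, dotProduct_comm]
    congr 1
    nth_rewrite 1 [show G = Gᵀ by rw [← conjTranspose_eq_transpose_of_trivial G, hG.1]]
    rw [vecMul_transpose]
  have key : ∀ t : ℝ, 0 ≤ (y ⬝ᵥ G *ᵥ y) * (t * t) + (2 * (x ⬝ᵥ G *ᵥ y)) * t + (x ⬝ᵥ G *ᵥ x) := by
    intro t
    have h0 := hG.dotProduct_mulVec_nonneg (x + t • y)
    simp only [star_trivial, mulVec_add, mulVec_smul, dotProduct_add, add_dotProduct,
      dotProduct_smul, smul_dotProduct, smul_eq_mul] at h0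
    rw [hsym y x] at h0
    linarith [h0]
  have := discrim_le_zero key
  rw [discrim] at this
  nlinarith [this]
end Quad

section Contract
variable {ι : Type*} [Fintype ι] [DecidableEq ι]

lemma dot_mulVec_symm {G : Matrix ι ι ℝ} (hG : G.IsHermitian) (u w : ι → ℝ) :
    u ⬝ᵥ G *ᵥ w = (G *ᵥ u) ⬝ᵥ w := by
  rw [dotProduct_mulVec]
  congr 1
  nth_rewrite 1 [show G = Gᵀ by rw [← conjTranspose_eq_transpose_of_trivial G, hG]]
  rw [vecMul_transpose]

lemma contraction (A : Matrix ι ι ℝ) (sig Sig : ℝ) (hsig : 0 < sig) (hle : sig ≤ Sig)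
    (hlo : ((Aᵀ * A) - sig ^ 2 • (1 : Matrix ι ι ℝ)).PosSemidef)
    (hhi : (Sig ^ 2 • (1 : Matrix ι ι ℝ) - (Aᵀ * A)).PosSemidef) (v : ι → ℝ) :
    vecEnorm (((1 : Matrix ι ι ℝ) - (2 / (sig ^ 2 + Sig ^ 2)) • (Aᵀ * A)) *ᵥ v) ≤
      ((Sig ^ 2 - sig ^ 2) / (Sig ^ 2 + sig ^ 2)) * vecEnorm v := by
  set s := sig ^ 2 with hs
  set S := Sig ^ 2 with hS
  have hs0 : 0 < s := by positivity
  have hsS : s ≤ S := by rw [hs, hS]; exact pow_le_pow_left₀ hsig.le hle 2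
  have hP : (0 : ℝ) < s + S := by linarith
  set H := Aᵀ * A with hH
  set G := H - s • (1 : Matrix ι ι ℝ) with hGdef
  set c := v ⬝ᵥ v with hc
  set a := (A *ᵥ v) ⬝ᵥ (A *ᵥ v) with ha
  set b := (H *ᵥ v) ⬝ᵥ (H *ᵥ v) with hb
  set B := (G *ᵥ v) ⬝ᵥ (G *ᵥ v) with hBdef
  have hGv : G *ᵥ v = H *ᵥ v - s • v := by
    rw [hGdef, sub_mulVec, smul_mulVec, one_mulVec]
  have hHform : ∀ u w : ι → ℝ, u ⬝ᵥ H *ᵥ w = (A *ᵥ u) ⬝ᵥ (A *ᵥ w) := fun u w => quadH A u w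
  have hGform : ∀ u w : ι → ℝ, u ⬝ᵥ G *ᵥ w = (A *ᵥ u) ⬝ᵥ (A *ᵥ w) - s * (u ⬝ᵥ w) := by
    intro u w
    rw [hGdef, sub_mulVec, dotProduct_sub, smul_mulVec, one_mulVec, dotProduct_smul,
      hHform, smul_eq_mul]
  have hg0 : 0 ≤ a - s * c := by
    have := psd_quad_lo A s hlo v; rw [← ha, ← hc] at this; linarith
  have hac : a ≤ S * c := by
    have := psd_quad_hi A S hhi v; rw [← ha, ← hc] at this; linarith
  have hGupper : ∀ w : ι → ℝ, w ⬝ᵥ G *ᵥ w ≤ (S - s) * (w ⬝ᵥ w) := by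
    intro w
    rw [hGform]
    have := psd_quad_hi A S hhi w
    nlinarith [this]
  -- cocoercivity: B ≤ (S - s) * (a - s*c)
  have hgv : v ⬝ᵥ G *ᵥ v = a - s * c := by rw [hGform, ← ha, ← hc]
  have hB0 : 0 ≤ B := dot_self_nonneg _
  have hBco : B ≤ (S - s) * (a - s * c) := by
    have hcs := psd_cs hlo v (G *ᵥ v)
    have e1 : v ⬝ᵥ G *ᵥ (G *ᵥ v) = B := by
      rw [dot_mulVec_symm hlo.1, ← hBdef]
    have e2 : (G *ᵥ v) ⬝ᵥ G *ᵥ (G *ᵥ v) ≤ (S - s) * B := by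
      have := hGupper (G *ᵥ v); rw [← hBdef] at this; exact this
    rw [e1, hgv] at hcs
    rcases eq_or_lt_of_le hB0 with h0 | h0
    · rw [← h0]; exact mul_nonneg (by linarith) hg0
    · nlinarith [hcs, e2, hg0]
  -- b = B + 2*s*a - s^2*c
  have hbB : b = B + 2 * s * a - s ^ 2 * c := by
    have : B = b - 2 * s * a + s ^ 2 * c := by
      rw [hBdef, hGv]
      have h1 : (H *ᵥ v) ⬝ᵥ v = a := by
        rw [← dotProduct_comm, hHform v v, ← ha]  -- careful
      have h2 : v ⬝ᵥ (H *ᵥ v) = a := by rw [hHform v v, ← ha]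
      simp only [dotProduct_sub, sub_dotProduct, smul_dotProduct, dotProduct_smul, smul_eq_mul]
      rw [h1, h2, ← hc, ← hb]
      ring
    linarith
  -- key linear bound
  have hkey : b ≤ a * (S + s) - s * S * c := by nlinarith [hBco, hbB]
  -- expand vecEnorm of Mv
  set ω := 2 / (s + S) with hω
  set ρ := (S - s) / (S + s) with hρ
  have hρ0 : 0 ≤ ρ := by
    apply div_nonneg <;> linarith
  have hMv : ((1 : Matrix ι ι ℝ) - ω • H) *ᵥ v = v - ω • (H *ᵥ v) := by
    rw [sub_mulVec, smul_mulVec, one_mulVec]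
  refine le_of_sq_le_sq' (mul_nonneg hρ0 (vecEnorm_nonneg' _)) ?_ (vecEnorm_nonneg' _)
  rw [mul_pow, vecEnorm_sq, vecEnorm_sq, hMv, ← hc]
  have hexp : (v - ω • (H *ᵥ v)) ⬝ᵥ (v - ω • (H *ᵥ v)) = c - 2 * ω * a + ω ^ 2 * b := by
    have h1 : (H *ᵥ v) ⬝ᵥ v = a := by rw [← dotProduct_comm, hHform v v, ← ha]
    have h2 : v ⬝ᵥ (H *ᵥ v) = a := by rw [hHform v v, ← ha]
    simp only [dotProduct_sub, sub_dotProduct, smul_dotProduct, dotProduct_smul, smul_eq_mul]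
    rw [h1, h2, ← hc, ← hb]
    ring
  rw [hexp]
  have hc0 : 0 ≤ c := dot_self_nonneg v
  have expand : ρ ^ 2 * c - (c - 2 * ω * a + ω ^ 2 * b) =
      (a * (S + s) - s * S * c - b) * (4 / (s + S) ^ 2) := by
    rw [hω, hρ]
    field_simp [hP.ne', (by linarith : S + s ≠ 0)]
    ring
  nlinarith [mul_nonneg (sub_nonneg.mpr hkey) (by positivity : (0:ℝ) ≤ 4 / (s + S) ^ 2), expand]
end Contract

noncomputable def riter {ι : Type*} [Fintype ι] (H : Matrix ι ι ℝ) (ω : ℝ) (w : ι → ℝ) :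
    ℕ → ι → ℝ
  | 0 => 0
  | t + 1 => riter H ω w t + ω • (w - H *ᵥ riter H ω w t)

lemma riter_err {ι : Type*} [Fintype ι] [DecidableEq ι] (H : Matrix ι ι ℝ) (ω : ℝ)
    (w y : ι → ℝ) (hy : H *ᵥ y = w) (t : ℕ) :
    y - riter H ω w (t + 1) = ((1 : Matrix ι ι ℝ) - ω • H) *ᵥ (y - riter H ω w t) := by
  rw [sub_mulVec, smul_mulVec, one_mulVec, mulVec_sub, hy]
  show y - (riter H ω w t + ω • (w - H *ᵥ riter H ω w t)) = _
  module

lemma vecEnorm_eq_sqrt_dot {α : Type*} [Fintype α] (v : α → ℝ) :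
    vecEnorm v = Real.sqrt (v ⬝ᵥ v) := by
  rw [← vecEnorm_sq, Real.sqrt_sq (vecEnorm_nonneg' v)]

theorem stmt_8 {N n : ℕ} (A : Matrix (Fin N × Fin n) (Fin N × Fin n) ℝ) (sig Sig : ℝ)
    (hinv : IsUnit A) (hsig : 0 < sig) (hle : sig ≤ Sig)
    (hlo : (Aᵀ * A - sig ^ 2 • (1 : Matrix (Fin N × Fin n) (Fin N × Fin n) ℝ)).PosSemidef)
    (hhi : (Sig ^ 2 • (1 : Matrix (Fin N × Fin n) (Fin N × Fin n) ℝ) - Aᵀ * A).PosSemidef)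
    (hband : ∀ (i j : Fin N) (a b : Fin n),
      ¬(0 ≤ (i : ℤ) - (j : ℤ) ∧ (i : ℤ) - (j : ℤ) ≤ 1) → A (i, a) (j, b) = 0)
    (d d' : Fin N × Fin n → ℝ) :
    ∀ i : Fin N,
      vecEnorm (fun a : Fin n => A⁻¹.mulVec d (i, a) - A⁻¹.mulVec d' (i, a)) ≤
        ∑ j : Fin N,
          (Sig / sig ^ 2) *
              ((Sig ^ 2 - sig ^ 2) / (Sig ^ 2 + sig ^ 2)) ^ (((i : ℤ) - (j : ℤ)).natAbs - 1) *
            vecEnorm (fun a : Fin n => d (j, a) - d' (j, a)) := by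
  intro i
  classical
  have hdet : IsUnit A.det := (Matrix.isUnit_iff_isUnit_det A).mp hinv
  have hAinv : ∀ v, A *ᵥ (A⁻¹ *ᵥ v) = v := by
    intro v
    rw [mulVec_mulVec, Matrix.mul_nonsing_inv A hdet, one_mulVec]
  set ρ := (Sig ^ 2 - sig ^ 2) / (Sig ^ 2 + sig ^ 2) with hρ
  set ω := 2 / (sig ^ 2 + Sig ^ 2) with hω
  set H := Aᵀ * A with hH
  have hρ0 : 0 ≤ ρ := by
    apply div_nonneg
    · nlinarith
    · positivity
  -- data decomposition
  set δvec : Fin N → (Fin N × Fin n) → ℝ :=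
    fun j p => if p.1 = j then d p - d' p else 0 with hδvec
  have hsum : ∑ j, δvec j = fun p => d p - d' p := by
    funext p
    rw [Finset.sum_apply]
    simp [hδvec]
  set y : Fin N → (Fin N × Fin n) → ℝ := fun j => A⁻¹ *ᵥ δvec j with hy
  -- rewrite LHS as stage of sum
  have hmvsum : A⁻¹ *ᵥ (∑ j, δvec j) = ∑ j, A⁻¹ *ᵥ δvec j := by
    simp only [← Matrix.mulVecLin_apply]
    exact map_sum A⁻¹.mulVecLin δvec Finset.univ
  have hzsum : (fun a : Fin n => A⁻¹.mulVec d (i, a) - A⁻¹.mulVec d' (i, a)) =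
      ∑ j, (fun a : Fin n => y j (i, a)) := by
    funext a
    rw [Finset.sum_apply]
    have e1 : ∑ j, y j (i, a) = (∑ j, y j) (i, a) := by rw [Finset.sum_apply]
    have e2 : (∑ j, y j) = A⁻¹ *ᵥ (fun p => d p - d' p) := by
      rw [← hsum, hmvsum]
    have e3 : (fun p : Fin N × Fin n => d p - d' p) = d - d' := rfl
    rw [e1, e2, e3, mulVec_sub]
    simp
  rw [hzsum]
  refine le_trans (vecEnorm_sum_le Finset.univ _) (Finset.sum_le_sum ?_)
  intro j _
  -- per-block bound
  set t := (((i : ℤ) - (j : ℤ)).natAbs - 1 : ℕ) with ht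
  set w := Aᵀ *ᵥ δvec j with hw
  have hHy : H *ᵥ y j = w := by
    rw [hy, hH, ← mulVec_mulVec, hAinv, hw]
  -- norm of δvec j
  have hδnorm : vecEnorm (δvec j) = vecEnorm (fun a : Fin n => d (j, a) - d' (j, a)) := by
    rw [vecEnorm_eq_sqrt_dot, vecEnorm_eq_sqrt_dot]
    congr 1
    rw [dotProduct, dotProduct, Fintype.sum_prod_type]
    simp [hδvec, ite_mul, mul_ite]
  have hAy : A *ᵥ y j = δvec j := hAinv _
  have hynorm : vecEnorm (y j) ≤ 1 / sig * vecEnorm (δvec j) := by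
    refine le_of_sq_le_sq' (mul_nonneg (by positivity) (vecEnorm_nonneg' _)) ?_ (vecEnorm_nonneg' _)
    rw [mul_pow, vecEnorm_sq, vecEnorm_sq, div_pow, one_pow]
    have hq := psd_quad_lo A (sig ^ 2) hlo (y j)
    rw [hAy] at hq
    have hs2 : (0 : ℝ) < sig ^ 2 := by positivity
    rw [div_mul_eq_mul_div, one_mul, le_div_iff₀ hs2]
    nlinarith [hq]
  have hsupp : ∀ tt : ℕ, ∀ k : Fin N, ∀ a : Fin n,
      tt + 1 ≤ ((k : ℤ) - (j : ℤ)).natAbs → riter H ω w tt (k, a) = 0 := by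
    intro tt
    induction tt with
    | zero => intro k a _; rfl
    | succ t' ih =>
      intro k a hk
      show (riter H ω w t' + ω • (w - H *ᵥ riter H ω w t')) (k, a) = 0
      have h1 : riter H ω w t' (k, a) = 0 := ih k a (by omega)
      have h2 : w (k, a) = 0 := by
        rw [hw]
        simp only [mulVec, dotProduct]
        apply Finset.sum_eq_zero
        rintro ⟨l, b⟩ -
        by_cases hl : l = j
        · subst hl
          rw [transpose_apply, hband l k b a (by omega)]
          ring
        · simp [hδvec, hl]
      have h3 : (H *ᵥ riter H ω w t') (k, a) = 0 := by
        simp only [mulVec, dotProduct]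
        apply Finset.sum_eq_zero
        rintro ⟨l, b⟩ -
        by_cases hl : ((l : ℤ) - (j : ℤ)).natAbs ≤ t'
        · have hH0 : H (k, a) (l, b) = 0 := by
            rw [hH, mul_apply]
            apply Finset.sum_eq_zero
            rintro ⟨m, c⟩ -
            rw [transpose_apply]
            by_cases hm : (0 ≤ (m : ℤ) - (k : ℤ) ∧ (m : ℤ) - (k : ℤ) ≤ 1)
            · rw [hband m l c b (by omega)]; ring
            · rw [hband m k c a hm]; ring
          rw [hH0]; ring
        · rw [ih l b (by omega)]; ring
      simp [h1, h2, h3]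
  have hcontr := contraction A sig Sig hsig hle hlo hhi
  have herr : ∀ tt : ℕ, vecEnorm (y j - riter H ω w tt) ≤ ρ ^ tt * vecEnorm (y j) := by
    intro tt
    induction tt with
    | zero =>
      show vecEnorm (y j - 0) ≤ _
      simp
    | succ t' ih =>
      rw [riter_err H ω w (y j) hHy t']
      calc vecEnorm (((1 : Matrix (Fin N × Fin n) (Fin N × Fin n) ℝ) - ω • H) *ᵥ
            (y j - riter H ω w t'))
          ≤ ρ * vecEnorm (y j - riter H ω w t') := hcontr _
        _ ≤ ρ * (ρ ^ t' * vecEnorm (y j)) := mul_le_mul_of_nonneg_left ih hρ0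
        _ = ρ ^ (t' + 1) * vecEnorm (y j) := by ring
  have hstage : (fun a : Fin n => y j (i, a)) = fun a => (y j - riter H ω w t) (i, a) := by
    funext a
    have h0 : riter H ω w t (i, a) = 0 := by
      rcases Nat.eq_zero_or_pos (((i : ℤ) - (j : ℤ)).natAbs) with h0 | h0
      · have ht0 : t = 0 := by omega
        rw [ht0]; rfl
      · exact hsupp t i a (by omega)
    simp [h0]
  rw [hstage]
  have h1s : 1 / sig ≤ Sig / sig ^ 2 := by
    rw [div_le_div_iff₀ hsig (by positivity)]
    nlinarith
  calc vecEnorm (fun a => (y j - riter H ω w t) (i, a))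
      ≤ vecEnorm (y j - riter H ω w t) := vecEnorm_stage_le _ i
    _ ≤ ρ ^ t * vecEnorm (y j) := herr t
    _ ≤ ρ ^ t * (1 / sig * vecEnorm (δvec j)) :=
        mul_le_mul_of_nonneg_left hynorm (pow_nonneg hρ0 t)
    _ = 1 / sig * (ρ ^ t * vecEnorm (fun a : Fin n => d (j, a) - d' (j, a))) := by
        rw [hδnorm]; ring
    _ ≤ Sig / sig ^ 2 * (ρ ^ t * vecEnorm (fun a : Fin n => d (j, a) - d' (j, a))) :=
        mul_le_mul_of_nonneg_right h1s
          (mul_nonneg (pow_nonneg hρ0 t) (vecEnorm_nonneg' _))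
    _ = Sig / sig ^ 2 * ρ ^ t * vecEnorm (fun a : Fin n => d (j, a) - d' (j, a)) := by ring
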